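/- Let k, p ≥ 2, let q_p = k^p − k, and let τ ∈ 𝒯_Fl[k,p] be a type of length ℓ realized by flat sets of cardinality p. Let s be a variable word over the alphabet [k]^{q_p} of length n. Then the set {Φ_{p,τ}(s(𝐚)) : 𝐚 ∈ [k]^{q_p}} contains a flat subset F ⊆ [k]^{n·ℓ} of cardinality p and type τ. -/

import Mathlib

/-- The word representation `R_p(F)` of a flat set `F` of cardinality `p`:
order `F` lexicographically as `t₀ <lex … <lex t_{p−1}`; for each coordinate `i` form the
column `āᵢ = (a_{i,0},…,a_{i,p−1})`; output the letter `a ∈ [k]` (`Sum.inl`) if the column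
is constant with value `a`, and the column itself (`Sum.inr`, a letter of `𝓛_p`) otherwise. -/
def Rp (k p : ℕ) (hk : 0 < k) (hp : 0 < p) (F : Finset (List (Fin k))) :
    List (Fin k ⊕ (Fin p → Fin k)) :=
  (List.range ((F.sort (· ≤ ·)).headD []).length).map fun i =>
    let row : Fin p → Fin k := fun j => ((F.sort (· ≤ ·)).getD (j : ℕ) []).getD i ⟨0, hk⟩
    if ∀ j, row j = row ⟨0, hp⟩ then Sum.inl (row ⟨0, hp⟩) else Sum.inr row

/-- The type of a flat set `F` of cardinality `p`: the type of its word representation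
`R_p(F)` (erase the letters of `[k]`, collapse runs of equal letters of `𝓛_p`). -/
def flatType (k p : ℕ) (hk : 0 < k) (hp : 0 < p) (F : Finset (List (Fin k))) :
    List (Fin p → Fin k) :=
  ((Rp k p hk hp F).filterMap Sum.getRight?).destutter (· ≠ ·)

open List

section Aux

variable {α : Type*} {β : Type*}

lemma headD_eq_getD' (l : List α) (d : α) : l.headD d = l.getD 0 d := by
  cases l <;> rfl

lemma destutter'_replicate_append [DecidableEq α] (a : α) (l : List α) :
    ∀ m, List.destutter' (· ≠ ·) a (List.replicate m a ++ l)
      = List.destutter' (· ≠ ·) a l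
  | 0 => rfl
  | m + 1 => by
    rw [List.replicate_succ, List.cons_append,
      List.destutter'_cons_neg _ (by simp)]
    exact destutter'_replicate_append a l m

lemma destutter'_flatten_replicate [DecidableEq α] (N : ℕ) :
    ∀ (τ : List α) (a : α), (a :: τ).Chain' (· ≠ ·) →
      List.destutter' (· ≠ ·) a ((τ.map (List.replicate (N + 1))).flatten) = a :: τ
  | [], a, _ => by simp
  | b :: τ', a, h => by
    have hab : a ≠ b := (List.isChain_cons_cons.mp h).1
    rw [List.map_cons, List.flatten_cons, List.replicate_succ, List.cons_append,
      List.destutter'_cons_pos _ hab, destutter'_replicate_append,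
      destutter'_flatten_replicate N τ' b (List.isChain_cons_cons.mp h).2]

lemma destutter_flatten_replicate [DecidableEq α] (N : ℕ) (τ : List α)
    (h : τ.Chain' (· ≠ ·)) :
    ((τ.map (List.replicate (N + 1))).flatten).destutter (· ≠ ·) = τ := by
  cases τ with
  | nil => simp
  | cons a τ' =>
    rw [List.map_cons, List.flatten_cons, List.replicate_succ, List.cons_append,
      List.destutter_cons', destutter'_replicate_append,
      destutter'_flatten_replicate N τ' a h]

lemma lex_cons_iff' [LinearOrder β] {x y : β} {u v : List β} :
    List.Lex (· < ·) (x :: u) (y :: v) ↔ x < y ∨ (x = y ∧ List.Lex (· < ·) u v) := by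
  constructor
  · intro h
    cases h with
    | rel h => exact .inl h
    | cons h => exact .inr ⟨rfl, h⟩
  · rintro (h | ⟨rfl, h⟩)
    exacts [.rel h, .cons h]

lemma lex_map_destutter' [DecidableEq α] [LinearOrder β] (f g : α → β) :
    ∀ (L : List α) (a : α),
      (List.Lex (· < ·) ((a :: L).map f) ((a :: L).map g) ↔
        List.Lex (· < ·) ((List.destutter' (· ≠ ·) a L).map f)
          ((List.destutter' (· ≠ ·) a L).map g))
  | [], a => by rw [List.destutter'_nil]
  | b :: L', a => by
    by_cases hab : a = b
    · subst hab
      rw [List.destutter'_cons_neg _ (by simp)]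
      rw [← lex_map_destutter' f g L' a]
      simp only [List.map_cons, lex_cons_iff']
      tauto
    · rw [List.destutter'_cons_pos _ (by simpa using hab)]
      have IH := lex_map_destutter' f g L' b
      simp only [List.map_cons] at IH ⊢
      rw [lex_cons_iff', IH, lex_cons_iff']

lemma lex_map_destutter [DecidableEq α] [LinearOrder β] (f g : α → β) (L : List α) :
    List.Lex (· < ·) (L.map f) (L.map g) ↔
      List.Lex (· < ·) ((L.destutter (· ≠ ·)).map f) ((L.destutter (· ≠ ·)).map g) := by
  cases L with
  | nil => simp
  | cons a L => rw [List.destutter_cons']; exact lex_map_destutter' f g L a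

/-- Decode a column letter at row `r`. -/
def decRow {k p : ℕ} (r : Fin p) : Fin k ⊕ (Fin p → Fin k) → Fin k
  | .inl a => a
  | .inr c => c r

lemma lex_map_decRow {k p : ℕ} (w : List (Fin k ⊕ (Fin p → Fin k))) (r r' : Fin p) :
    List.Lex (· < ·) (w.map (decRow r)) (w.map (decRow r')) ↔
      List.Lex (· < ·) ((w.filterMap Sum.getRight?).map (fun c => c r))
        ((w.filterMap Sum.getRight?).map (fun c => c r')) := by
  induction w with
  | nil => simp
  | cons z w ih =>
    cases z with
    | inl a =>
      simp only [List.map_cons, List.filterMap_cons, Sum.getRight?, decRow]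
      rw [List.lex_cons_iff]
      exact ih
    | inr c =>
      simp only [List.map_cons, List.filterMap_cons, Sum.getRight?, decRow]
      rw [lex_cons_iff', lex_cons_iff', ih]

lemma list_lt_iff_lex [LinearOrder β] (u v : List β) :
    u < v ↔ List.Lex (· < ·) u v := Iff.rfl

/-- Master lemma: comparing decoded rows of a column word `w` is the same as comparing
the rows of its flat type. -/
lemma lt_map_decRow_iff {k p : ℕ} (w : List (Fin k ⊕ (Fin p → Fin k))) (r r' : Fin p) :
    w.map (decRow r) < w.map (decRow r') ↔
      ((w.filterMap Sum.getRight?).destutter (· ≠ ·)).map (fun c => c r) <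
        ((w.filterMap Sum.getRight?).destutter (· ≠ ·)).map (fun c => c r') := by
  rw [list_lt_iff_lex, list_lt_iff_lex, lex_map_decRow, lex_map_destutter]

lemma filterMap_elim_count {γ : Type*} {δ : Type*} [DecidableEq γ] (c : δ) :
    ∀ s : List (Option γ),
      s.filterMap (fun o => o.elim (some c) (fun _ => none))
        = List.replicate (s.count none) c
  | [] => rfl
  | none :: t => by
    have h1 : ((none : Option γ) :: t).count none = t.count none + 1 := by
      simp [List.count_cons]
    rw [List.filterMap_cons, h1, List.replicate_succ]
    show c :: t.filterMap _ = _
    rw [filterMap_elim_count c t]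
  | some v :: t => by
    have h1 : ((some v : Option γ) :: t).count none = t.count none := by
      simp [List.count_cons]
    rw [List.filterMap_cons, h1]
    show t.filterMap _ = _
    rw [filterMap_elim_count c t]

end Aux

/-- Let `k, p ≥ 2`, `q_p = k^p − k`, and let `τ ∈ 𝒯_Fl[k,p]` be a type
of length `ℓ` realized by some flat set of cardinality `p`. Let `e` enumerate the alphabet
`𝓛_p` (the nonconstant elements of `[k]^p`) and let `idx` give the positions of the
letters of `τ` in this enumeration. If `s` is a variable word over `[k]^{q_p}` of length
`n`, then the set `{Φ_{p,τ}(s(𝐚)) : 𝐚 ∈ [k]^{q_p}}` — where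
`Φ_{p,τ}(t) = t̄_{i₀}⌢…⌢t̄_{i_{ℓ−1}}` concatenates the coordinate rows of `t` selected by
`τ` — contains a flat set `F ⊆ [k]^{n·ℓ}` of cardinality `p` and type `τ`. -/
theorem stmt_17 (k p n : ℕ) (hk : 2 ≤ k) (hp : 2 ≤ p)
    (τ : List (Fin p → Fin k)) (hτne : τ ≠ []) (hchain : τ.Chain' (· ≠ ·))
    (hletters : ∀ l ∈ τ, ¬ ∃ a : Fin k, ∀ j, l j = a)
    (hreal : ∃ F : Finset (List (Fin k)),
      (F.card = p ∧ ∃ m, ∀ x ∈ F, x.length = m) ∧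
      flatType k p (by omega) (by omega) F = τ)
    (e : Fin (k ^ p - k) → (Fin p → Fin k))
    (he : Function.Injective e) (herange : ∀ i, ¬ ∃ a : Fin k, ∀ j, e i j = a)
    (idx : Fin τ.length → Fin (k ^ p - k)) (hidx : ∀ j, e (idx j) = τ.get j)
    (s : List (Option (Fin (k ^ p - k) → Fin k))) (hvar : none ∈ s)
    (hslen : s.length = n) :
    ∃ F : Finset (List (Fin k)),
      F.card = p ∧ (∀ x ∈ F, x.length = n * τ.length) ∧
      flatType k p (by omega) (by omega) F = τ ∧
      ↑F ⊆ {x : List (Fin k) | ∃ a : Fin (k ^ p - k) → Fin k,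
        x = (List.ofFn fun j : Fin τ.length =>
          (s.map fun o => o.getD a).map fun v => v (idx j)).flatten} := by
  classical
  have hk0 : 0 < k := by omega
  have hp0 : 0 < p := by omega
  -- Step 1: extract strict monotonicity of `r ↦ τ.map (· r)` from realizability.
  obtain ⟨F', ⟨hF'card, m, hm⟩, hF'type⟩ := hreal
  have hF'type' : ((Rp k p hk0 hp0 F').filterMap Sum.getRight?).destutter (· ≠ ·) = τ :=
    hF'type
  have tupmono : ∀ r r' : Fin p, r < r' →
      τ.map (fun c => c r) < τ.map (fun c => c r') := by
    intro r r' hrr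
    have hyslen : (F'.sort (· ≤ ·)).length = p := by
      rw [Finset.length_sort, hF'card]
    have hylen : ∀ j : Fin p, ((F'.sort (· ≤ ·)).getD (j : ℕ) []).length = m := by
      intro j
      have hj : (j : ℕ) < (F'.sort (· ≤ ·)).length := by rw [hyslen]; exact j.isLt
      rw [List.getD_eq_getElem _ _ hj]
      exact hm _ ((Finset.mem_sort _).1 (List.getElem_mem hj))
    have hhead : ((F'.sort (· ≤ ·)).headD []).length = m := by
      have h0 : (0 : ℕ) < (F'.sort (· ≤ ·)).length := by omega
      rw [headD_eq_getD', List.getD_eq_getElem _ _ h0]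
      exact hm _ ((Finset.mem_sort _).1 (List.getElem_mem h0))
    have hrow : ∀ rr : Fin p,
        (Rp k p hk0 hp0 F').map (decRow rr) = (F'.sort (· ≤ ·)).getD (rr : ℕ) [] := by
      intro rr
      apply List.ext_getElem
      · simp only [Rp, List.length_map, List.length_range]
        rw [hhead, hylen rr]
      · intro i h1 h2
        simp only [Rp, List.map_map, List.getElem_map, List.getElem_range,
          Function.comp_apply]
        split_ifs with hc
        · simp only [decRow]
          rw [← hc rr, List.getD_eq_getElem _ _ h2]
        · simp only [decRow]
          rw [List.getD_eq_getElem _ _ h2]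
    have hyy : (F'.sort (· ≤ ·)).getD (r : ℕ) [] < (F'.sort (· ≤ ·)).getD (r' : ℕ) [] := by
      have h1 : (r : ℕ) < (F'.sort (· ≤ ·)).length := by rw [hyslen]; exact r.isLt
      have h2 : (r' : ℕ) < (F'.sort (· ≤ ·)).length := by rw [hyslen]; exact r'.isLt
      rw [List.getD_eq_getElem _ _ h1, List.getD_eq_getElem _ _ h2]
      exact List.pairwise_iff_getElem.1 (Finset.sortedLT_sort F').pairwise _ _ h1 h2 hrr
    have := (lt_map_decRow_iff (Rp k p hk0 hp0 F') r r').1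
      (by rw [hrow r, hrow r']; exact hyy)
    rwa [hF'type'] at this
  -- Step 2: construct the flat set.
  set x : Fin p → List (Fin k) := fun r =>
    (List.ofFn fun j : Fin τ.length =>
      (s.map fun o => o.getD (fun i => e i r)).map fun v => v (idx j)).flatten with hxdef
  set w : List (Fin k ⊕ (Fin p → Fin k)) :=
    (List.ofFn fun j : Fin τ.length =>
      s.map fun o => o.elim (Sum.inr (τ.get j)) fun v => Sum.inl (v (idx j))).flatten
    with hwdef
  obtain ⟨N', hN'⟩ : ∃ N', s.count none = N' + 1 := by
    have : 0 < s.count none := List.count_pos_iff.2 hvar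
    exact ⟨s.count none - 1, by omega⟩
  have hx : ∀ r, w.map (decRow r) = x r := by
    intro r
    rw [hwdef, hxdef, List.map_flatten, List.map_ofFn]
    refine congrArg _ (congrArg _ (funext fun j => ?_))
    simp only [Function.comp_apply, List.map_map]
    refine congrArg (fun f => List.map f s) (funext fun o => ?_)
    cases o with
    | none =>
      simp only [Function.comp_apply, Option.elim, decRow, Option.getD]
      rw [hidx j]
    | some v => rfl
  have hG : w.filterMap Sum.getRight?
      = (τ.map (List.replicate (N' + 1))).flatten := by
    rw [hwdef, List.filterMap_flatten, List.map_ofFn]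
    have hblock : ∀ j : Fin τ.length,
        (List.filterMap Sum.getRight? ∘ fun jj : Fin τ.length =>
          s.map fun o => o.elim (Sum.inr (τ.get jj)) fun v => Sum.inl (v (idx jj))) j
        = List.replicate (N' + 1) (τ.get j) := by
      intro j
      simp only [Function.comp_apply, List.filterMap_map]
      have : (Sum.getRight? ∘ fun o : Option (Fin (k ^ p - k) → Fin k) =>
          o.elim (Sum.inr (τ.get j)) fun v => Sum.inl (v (idx j)))
          = fun o => o.elim (some (τ.get j)) (fun _ => none) := by
        funext o; cases o <;> rfl
      simp only [Function.comp_def] at this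
      rw [this, filterMap_elim_count, hN']
    rw [funext hblock]
    conv_rhs => rw [← List.ofFn_get τ, List.map_ofFn]
    rfl
  have hGd : (w.filterMap Sum.getRight?).destutter (· ≠ ·) = τ := by
    rw [hG]
    exact destutter_flatten_replicate N' τ hchain
  have hwmem : ∀ z ∈ w, (∃ a, z = .inl a) ∨ ∃ jj : Fin τ.length, z = .inr (τ.get jj) := by
    intro z hz
    rw [hwdef, List.mem_flatten] at hz
    obtain ⟨bl, hbl, hzbl⟩ := hz
    rw [List.mem_ofFn] at hbl
    obtain ⟨j, rfl⟩ := hbl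
    rw [List.mem_map] at hzbl
    obtain ⟨o, _, rfl⟩ := hzbl
    cases o with
    | none => exact .inr ⟨j, rfl⟩
    | some v => exact .inl ⟨v (idx j), rfl⟩
  have xmono : StrictMono x := by
    intro r r' hrr
    have h2 := (lt_map_decRow_iff w r r').2 (by rw [hGd]; exact tupmono r r' hrr)
    rwa [hx r, hx r'] at h2
  have hxlen : ∀ r, (x r).length = τ.length * n := by
    intro r
    rw [hxdef]
    simp [List.length_flatten, List.map_ofFn, Function.comp_def, hslen,
      List.ofFn_const, List.sum_replicate, smul_eq_mul]
  have hwlen : w.length = τ.length * n := by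
    rw [hwdef]
    simp [List.length_flatten, List.map_ofFn, Function.comp_def, hslen,
      List.ofFn_const, List.sum_replicate, smul_eq_mul]
  have hnd : (List.ofFn x).Nodup := List.nodup_ofFn.2 xmono.injective
  refine ⟨(List.ofFn x).toFinset, ?_, ?_, ?_, ?_⟩
  · rw [List.toFinset_card_of_nodup hnd, List.length_ofFn]
  · intro z hz
    rw [List.mem_toFinset, List.mem_ofFn] at hz
    obtain ⟨r, rfl⟩ := hz
    rw [hxlen r, Nat.mul_comm]
  · -- flatType = τ
    have hsort : (List.ofFn x).toFinset.sort (· ≤ ·) = List.ofFn x := by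
      refine List.Perm.eq_of_pairwise' (Finset.pairwise_sort _ _) ?_
        ((Finset.sort_perm_toList _ _).trans (List.toFinset_toList hnd))
      exact List.pairwise_ofFn.2 fun i j h => (xmono h).le
    have hx0 : ∀ j : Fin p, ((List.ofFn x).toFinset.sort (· ≤ ·)).getD (j : ℕ) [] = x j := by
      intro j
      rw [hsort, List.getD_eq_getElem _ _ (by simp : (j : ℕ) < (List.ofFn x).length),
        List.getElem_ofFn]
    have hRw : Rp k p hk0 hp0 ((List.ofFn x).toFinset) = w := by
      have hhead0 : (((List.ofFn x).toFinset.sort (· ≤ ·)).headD []).length = w.length := by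
        rw [headD_eq_getD']
        have h0 : (0 : ℕ) < ((List.ofFn x).toFinset.sort (· ≤ ·)).length := by
          rw [hsort]; simp [hp0]
        rw [hsort] at h0 ⊢
        rw [List.getD_eq_getElem _ _ h0, List.getElem_ofFn]
        rw [hxlen, hwlen]
      apply List.ext_getElem
      · simp only [Rp, List.length_map, List.length_range]
        exact hhead0
      · intro i h1 h2
        have hi : i < w.length := h2
        have hrowi : ∀ j : Fin p,
            (((List.ofFn x).toFinset.sort (· ≤ ·)).getD (j : ℕ) []).getD i ⟨0, hk0⟩
              = decRow j w[i] := by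
          intro j
          rw [hx0 j, ← hx j,
            List.getD_eq_getElem _ _ (by simpa using hi), List.getElem_map]
        simp only [Rp, List.getElem_map, List.getElem_range]
        rcases hwmem w[i] (List.getElem_mem hi) with ⟨a, hz⟩ | ⟨jj, hz⟩
        · have hr : ∀ j : Fin p,
              (((List.ofFn x).toFinset.sort (· ≤ ·)).getD (j : ℕ) []).getD i ⟨0, hk0⟩ = a :=
            fun j => by rw [hrowi j, hz]; rfl
          rw [if_pos (fun j => (hr j).trans (hr ⟨0, hp0⟩).symm)]
          exact (congrArg Sum.inl (hr ⟨0, hp0⟩)).trans hz.symm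
        · have hr : ∀ j : Fin p,
              (((List.ofFn x).toFinset.sort (· ≤ ·)).getD (j : ℕ) []).getD i ⟨0, hk0⟩
                = τ.get jj j :=
            fun j => by rw [hrowi j, hz]; rfl
          rw [if_neg ?negc]
          case negc =>
            intro hcond
            refine hletters (τ.get jj) (List.get_mem τ jj)
              ⟨τ.get jj ⟨0, hp0⟩, fun j => ?_⟩
            rw [← hr j, ← hr ⟨0, hp0⟩]
            exact hcond j
          exact (congrArg Sum.inr (funext hr)).trans hz.symm
    show ((Rp k p hk0 hp0 ((List.ofFn x).toFinset)).filterMap Sum.getRight?).destutter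
      (· ≠ ·) = τ
    rw [hRw]
    exact hGd
  · intro z hz
    simp only [Finset.coe_sort_coe, Finset.mem_coe, List.mem_toFinset, List.mem_ofFn,
      Set.mem_range] at hz
    obtain ⟨r, rfl⟩ := hz
    exact ⟨fun i => e i r, rfl⟩
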